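/- Let S be a factorizable Boolean sublattice and let C be a connected component of the quarkic graph G(S). Then the Boolean sublattice ⟨V(C)⟩ generated by the vertex set of C is factorizable, and the set of quarks of ⟨V(C)⟩ equals A(S) ∩ ⟨V(C)⟩. -/

import Mathlib

open scoped ENNReal

/-- A Boolean sublattice: a set of finite subsets of `ℕ` that contains `∅` and is
closed under binary unions (ordered by inclusion, with joins given by unions). -/
def IsBSL (S : Set (Finset ℕ)) : Prop :=
  ∅ ∈ S ∧ ∀ A ∈ S, ∀ B ∈ S, A ∪ B ∈ S

/-- A quark of `S`: a nonempty element of `S` covering `∅` in `S`, i.e. there is no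
`B ∈ S` with `∅ ⊊ B ⊊ A`. -/
def IsQuark (S : Set (Finset ℕ)) (A : Finset ℕ) : Prop :=
  A ∈ S ∧ A ≠ ∅ ∧ ∀ B ∈ S, B ≠ ∅ → ¬ B ⊂ A

/-- `z` is a factorization of `X` into quarks of `S`: a finite set of quarks whose
union is `X` such that no proper subset of `z` has union `X`. -/
def IsFactorization (S : Set (Finset ℕ)) (X : Finset ℕ) (z : Finset (Finset ℕ)) : Prop :=
  (∀ A ∈ z, IsQuark S A) ∧ z.sup id = X ∧ ∀ w, w ⊂ z → w.sup id ≠ X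

/-- The set `Z(X)` of factorizations of `X` in `S`. -/
def Factorizations (S : Set (Finset ℕ)) (X : Finset ℕ) : Set (Finset (Finset ℕ)) :=
  {z | IsFactorization S X z}

/-- `S` is factorizable: every nonempty element of `S` has a factorization. -/
def Factorizable (S : Set (Finset ℕ)) : Prop :=
  ∀ X ∈ S, X ≠ ∅ → (Factorizations S X).Nonempty

/-- `S` is a unique factorization semilattice: every nonempty element of `S` has
exactly one factorization. -/
def IsUFS (S : Set (Finset ℕ)) : Prop :=
  ∀ X ∈ S, X ≠ ∅ → ∃! z, z ∈ Factorizations S X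

/-- `S` is a half-factorial semilattice: for every nonempty `X ∈ S` the set of
factorization lengths of `X` is a singleton. -/
def IsHFS (S : Set (Finset ℕ)) : Prop :=
  ∀ X ∈ S, X ≠ ∅ → (Factorizations S X).Nonempty ∧
    ∀ z ∈ Factorizations S X, ∀ z' ∈ Factorizations S X, z.card = z'.card

/-- `S` is a length-factorial semilattice: two distinct factorizations of the same
nonempty element of `S` have different cardinalities. -/
def IsLFS (S : Set (Finset ℕ)) : Prop :=
  ∀ X ∈ S, X ≠ ∅ → ∀ z ∈ Factorizations S X, ∀ z' ∈ Factorizations S X,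
    z.card = z'.card → z = z'

/-- The Boolean sublattice generated by a collection `𝒜` of finite subsets of `ℕ`:
the smallest set of finite subsets of `ℕ` containing `{∅} ∪ 𝒜` and closed under
binary unions. -/
def genBSL (𝒜 : Set (Finset ℕ)) : Set (Finset ℕ) :=
  ⋂₀ {T | IsBSL T ∧ 𝒜 ⊆ T}

/-- An isolated quark: a quark disjoint from every other quark of `S`. -/
def IsIsolatedQuark (S : Set (Finset ℕ)) (A : Finset ℕ) : Prop :=
  IsQuark S A ∧ ∀ B, IsQuark S B → B ≠ A → Disjoint A B

/-- An excess quark: a quark each of whose elements belongs to some other quark. -/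
def IsExcessQuark (S : Set (Finset ℕ)) (A : Finset ℕ) : Prop :=
  IsQuark S A ∧ ∀ j ∈ A, ∃ B, IsQuark S B ∧ B ≠ A ∧ j ∈ B

/-- The quarkic graph of `S`: vertices are the quarks of `S`, with an edge between
distinct quarks having nonempty intersection. -/
def quarkicGraph (S : Set (Finset ℕ)) : SimpleGraph {A : Finset ℕ // IsQuark S A} :=
  SimpleGraph.fromRel (fun A B => ((A : Finset ℕ) ∩ (B : Finset ℕ)).Nonempty)

/-- The vertex set `V(C)` of a connected component of the quarkic graph, as a set of
finite subsets of `ℕ`. -/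
def compVerts (S : Set (Finset ℕ)) (C : (quarkicGraph S).ConnectedComponent) :
    Set (Finset ℕ) :=
  Subtype.val '' C.supp

/-- The pairing graph of `S` (for `S` with quarks of size at most 2): vertices are `ℕ`,
with an edge between distinct `a`, `b` whenever `{a, b}` is a quark of `S`. -/
def pairingGraph (S : Set (Finset ℕ)) : SimpleGraph ℕ :=
  SimpleGraph.fromRel (fun a b => IsQuark S {a, b})

/-- The edge set of a connected component `C` of the pairing graph, each edge `{a,b}`
regarded as the 2-element subset `{a, b}` of `ℕ`. -/
def compEdgeSets (S : Set (Finset ℕ)) (C : (pairingGraph S).ConnectedComponent) :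
    Set (Finset ℕ) :=
  {A | ∃ a b : ℕ, (pairingGraph S).Adj a b ∧ a ∈ C.supp ∧ A = {a, b}}

/-- `v` has degree at least `n` in `G` (valid also for infinite graphs). -/
def DegAtLeast {V : Type*} (G : SimpleGraph V) (v : V) (n : ℕ) : Prop :=
  ∃ s : Finset V, s.card = n ∧ ∀ u ∈ s, G.Adj v u

/-- `v` has degree exactly `n` in `G`: its neighbor set is a finite set of size `n`. -/
def DegExactly {V : Type*} (G : SimpleGraph V) (v : V) (n : ℕ) : Prop :=
  ∃ s : Finset V, s.card = n ∧ ∀ u, G.Adj v u ↔ u ∈ s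

/-- A leaf: a vertex of degree exactly 1. -/
def IsLeaf {V : Type*} (G : SimpleGraph V) (v : V) : Prop := DegExactly G v 1

/-- A candy graph: a connected simple graph of diameter at most 4 that contains a
cycle of length `k` if and only if `k = 4`. -/
def IsCandy {V : Type*} (G : SimpleGraph V) : Prop :=
  G.Connected ∧
  (∀ u v : V, ∃ p : G.Walk u v, p.length ≤ 4) ∧
  (∀ k : ℕ, (∃ (v : V) (c : G.Walk v v), c.IsCycle ∧ c.length = k) ↔ k = 4)

/-- The connected component `C` of `G` contains no cycle. -/
def CompAcyclic {V : Type*} (G : SimpleGraph V) (C : G.ConnectedComponent) : Prop :=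
  ∀ v ∈ C.supp, ∀ c : G.Walk v v, ¬ c.IsCycle

/-- Every path inside the connected component `C` has length at most `d` (for a tree
component this says its diameter is at most `d`). -/
def CompDiamLe {V : Type*} (G : SimpleGraph V) (C : G.ConnectedComponent) (d : ℕ) : Prop :=
  ∀ (u v : V), u ∈ C.supp → ∀ p : G.Walk u v, p.IsPath → p.length ≤ d

/-- The connected component `C` of `G` is (as an induced subgraph) the cycle graph on
`n` vertices. -/
def CompIsCycleGraph {V : Type*} (G : SimpleGraph V) (C : G.ConnectedComponent)
    (n : ℕ) : Prop :=
  ∃ v : Fin n → V, Function.Injective v ∧ C.supp = Set.range v ∧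
    ∀ i j : Fin n, G.Adj (v i) (v j) ↔
      ((j : ℕ) = ((i : ℕ) + 1) % n ∨ (i : ℕ) = ((j : ℕ) + 1) % n)

/-- The connected component `C` of `G` is (as an induced subgraph) a candy graph:
it has diameter at most 4 and contains a cycle of length `k` iff `k = 4`. -/
def CompIsCandy {V : Type*} (G : SimpleGraph V) (C : G.ConnectedComponent) : Prop :=
  (∀ u v, u ∈ C.supp → v ∈ C.supp → ∃ p : G.Walk u v, p.length ≤ 4) ∧
  (∀ k : ℕ, (∃ v ∈ C.supp, ∃ c : G.Walk v v, c.IsCycle ∧ c.length = k) ↔ k = 4)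

/-- The set of factorization lengths `L(X)` of `X` in `S`. -/
def lengthsOf (S : Set (Finset ℕ)) (X : Finset ℕ) : Set ℕ :=
  Finset.card '' Factorizations S X

/-- The elasticity `ρ(X) = sup L(X) / min L(X)` of a nonempty element `X` of `S`,
valued in the extended nonnegative reals. -/
noncomputable def elasticityOf (S : Set (Finset ℕ)) (X : Finset ℕ) : ℝ≥0∞ :=
  (⨆ n ∈ lengthsOf S X, (n : ℝ≥0∞)) / ((sInf (lengthsOf S X) : ℕ) : ℝ≥0∞)

/-- The elasticity `ρ(S)` of a Boolean sublattice `S`. -/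
noncomputable def elasticity (S : Set (Finset ℕ)) : ℝ≥0∞ :=
  ⨆ X ∈ {X | X ∈ S ∧ X ≠ ∅}, elasticityOf S X


lemma genBSL_subset {𝒜 T : Set (Finset ℕ)} (hT : IsBSL T) (h : 𝒜 ⊆ T) :
    genBSL 𝒜 ⊆ T := fun _ hA => hA T ⟨hT, h⟩

lemma subset_genBSL (𝒜 : Set (Finset ℕ)) : 𝒜 ⊆ genBSL 𝒜 :=
  fun _ hA _ hT => hT.2 hA

lemma sup_mem_of_BSL {T : Set (Finset ℕ)} (hT : IsBSL T) (z : Finset (Finset ℕ))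
    (hz : ∀ A ∈ z, A ∈ T) : z.sup id ∈ T := by
  induction z using Finset.induction_on with
  | empty => simpa using hT.1
  | @insert a s hnotmem ih =>
    rw [Finset.sup_insert]
    exact hT.2 a (hz a (Finset.mem_insert_self a s)) _
      (ih fun A hA => hz A (Finset.mem_insert_of_mem hA))

lemma mem_genBSL_iff {𝒜 : Set (Finset ℕ)} {A : Finset ℕ} :
    A ∈ genBSL 𝒜 ↔ A = ∅ ∨ ∃ z : Finset (Finset ℕ),
      z.Nonempty ∧ ↑z ⊆ 𝒜 ∧ z.sup id = A := by
  constructor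
  · intro hA
    have : IsBSL {A | A = ∅ ∨ ∃ z : Finset (Finset ℕ),
        z.Nonempty ∧ ↑z ⊆ 𝒜 ∧ z.sup id = A} := by
      refine ⟨Or.inl rfl, ?_⟩
      rintro X (rfl | ⟨z1, hz1, hz1s, rfl⟩) Y (rfl | ⟨z2, hz2, hz2s, rfl⟩)
      · exact Or.inl rfl
      · exact Or.inr ⟨z2, hz2, hz2s, by simp⟩
      · exact Or.inr ⟨z1, hz1, hz1s, by simp⟩
      · refine Or.inr ⟨z1 ∪ z2, hz1.mono Finset.subset_union_left, ?_, ?_⟩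
        · intro B hB
          rcases Finset.mem_union.mp hB with h | h
          · exact hz1s h
          · exact hz2s h
        · exact Finset.sup_union
    refine hA _ ⟨this, fun B hB => Or.inr ⟨{B}, Finset.singleton_nonempty B, ?_, by simp⟩⟩
    simpa using hB
  · rintro (rfl | ⟨z, hz, hzs, rfl⟩)
    · intro T hT; exact hT.1.1
    · intro T hT
      exact sup_mem_of_BSL hT.1 z fun B hB => hT.2 (hzs hB)

lemma compVerts_quark {S : Set (Finset ℕ)} {C : (quarkicGraph S).ConnectedComponent}
    {A : Finset ℕ} (hA : A ∈ compVerts S C) : IsQuark S A := by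
  rcases hA with ⟨⟨B, hB⟩, _, rfl⟩; exact hB

/-- For a factorizable Boolean sublattice `S` and a connected component `C`
of the quarkic graph, `⟨V(C)⟩` is factorizable and its set of quarks is
`A(S) ∩ ⟨V(C)⟩`. -/
theorem stmt_1 (S : Set (Finset ℕ)) (hS : IsBSL S) (hfac : Factorizable S)
    (C : (quarkicGraph S).ConnectedComponent) :
    Factorizable (genBSL (compVerts S C)) ∧
    {A | IsQuark (genBSL (compVerts S C)) A} =
      {A | IsQuark S A} ∩ genBSL (compVerts S C) := by
  classical
  set 𝒜 := compVerts S C with h𝒜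
  set T := genBSL 𝒜 with hT
  have h𝒜S : 𝒜 ⊆ S := fun A hA => (compVerts_quark hA).1
  have hTS : T ⊆ S := genBSL_subset hS h𝒜S
  have h𝒜T : 𝒜 ⊆ T := subset_genBSL 𝒜
  -- quarks of S that lie in T are quarks of T
  have hq1 : ∀ A, IsQuark S A → A ∈ T → IsQuark T A := by
    intro A hA hAT
    exact ⟨hAT, hA.2.1, fun B hB hBne => hA.2.2 B (hTS hB) hBne⟩
  have hq2 : ∀ A, IsQuark T A → A ∈ 𝒜 := by
    intro A hA
    rcases mem_genBSL_iff.mp hA.1 with rfl | ⟨z, hz, hzs, hsup⟩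
    · exact absurd rfl hA.2.1
    · obtain ⟨B, hB⟩ := hz
      have hBA : B ⊆ A := hsup ▸ Finset.le_sup (f := id) hB
      have hB𝒜 : B ∈ 𝒜 := hzs hB
      have hBq := compVerts_quark hB𝒜
      have : ¬ B ⊂ A := hA.2.2 B (h𝒜T hB𝒜) hBq.2.1
      have : B = A := by
        rcases eq_or_ne B A with h | h
        · exact h
        · exact absurd (Finset.ssubset_iff_subset_ne.mpr ⟨hBA, h⟩) this
      exact this ▸ hB𝒜
  constructor
  · -- factorizable
    intro X hX hXne
    rcases mem_genBSL_iff.mp hX with rfl | ⟨z, hz, hzs, hsup⟩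
    · exact absurd rfl hXne
    · have hne : (z.powerset.filter (fun w => w.sup id = X)).Nonempty :=
        ⟨z, Finset.mem_filter.mpr ⟨Finset.mem_powerset.mpr le_rfl, hsup⟩⟩
      obtain ⟨w, hwM⟩ := Finset.exists_minimal hne
      have hw : w ∈ z.powerset.filter (fun w => w.sup id = X) := hwM.prop
      have hwmin : ∀ x ∈ z.powerset.filter (fun w => w.sup id = X), ¬ x < w :=
        fun x hx => hwM.not_lt hx
      rw [Finset.mem_filter, Finset.mem_powerset] at hw
      refine ⟨w, ?_, hw.2, ?_⟩
      · intro A hA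
        have hA𝒜 : A ∈ 𝒜 := hzs (hw.1 hA)
        exact hq1 A (compVerts_quark hA𝒜) (h𝒜T hA𝒜)
      · intro v hv hveq
        exact hwmin v (Finset.mem_filter.mpr
          ⟨Finset.mem_powerset.mpr (hv.subset.trans hw.1), hveq⟩) hv
  · ext A
    simp only [Set.mem_setOf_eq, Set.mem_inter_iff]
    constructor
    · intro hA
      have hA𝒜 := hq2 A hA
      exact ⟨compVerts_quark hA𝒜, hA.1⟩
    · rintro ⟨hAq, hAT⟩
      exact hq1 A hAq hAT
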